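/- arXiv:1410.0843 — 3 statements merged into one kernel-verified Lean document; each statement's English description precedes it below -/
import Mathlib

section
/- Let N be a positive integer, s ∈ (0,2) a real number with s < N, 2*_s = 2N/(N−s), p ∈ (2, 2*_s), and γ = (ps − N(p−2))/(2s). Let V, K : ℝ^N → ℝ be continuous with V(x) > 0 and K(x) > 0 for all x, and suppose lim_{|x|→∞} K(x)/V(x)^γ = 0. Then for every ε > 0 there exists r > 0 such that for all x ∈ ℝ^N with |x| ≥ r and all t ∈ ℝ one has K(x)|t|^p ≤ ε (V(x) t² + |t|^{2*_s}). -/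
open Filter

/-- If `V, K > 0` are continuous and `K(x)/V(x)^γ → 0` as `|x| → ∞`, with
`γ = (ps − N(p−2))/(2s)`, then for every `ε > 0` there is `r > 0` such that
`K(x)|t|^p ≤ ε (V(x) t² + |t|^{2*_s})` for all `|x| ≥ r` and all `t ∈ ℝ`. -/
theorem stmt_1 (N : ℕ) (hN : 0 < N) (s : ℝ) (hs0 : 0 < s) (hs2 : s < 2)
    (hsN : s < (N : ℝ)) (p : ℝ) (hp2 : 2 < p) (hpc : p < 2 * N / (N - s))
    (V K : EuclideanSpace ℝ (Fin N) → ℝ)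
    (hVcont : Continuous V) (hKcont : Continuous K)
    (hVpos : ∀ x, 0 < V x) (hKpos : ∀ x, 0 < K x)
    (hlim : Tendsto (fun x => K x / (V x) ^ ((p * s - N * (p - 2)) / (2 * s)))
      (cocompact (EuclideanSpace ℝ (Fin N))) (nhds 0)) :
    ∀ ε > (0 : ℝ), ∃ r > (0 : ℝ), ∀ x : EuclideanSpace ℝ (Fin N), r ≤ ‖x‖ →
      ∀ t : ℝ, K x * |t| ^ p ≤ ε * (V x * t ^ 2 + |t| ^ (2 * N / (N - s))) := by
  intro ε hε
  set γ : ℝ := (p * s - N * (p - 2)) / (2 * s) with hγdef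
  set q : ℝ := 2 * N / (N - s) with hqdef
  have hN' : (0:ℝ) < N := by exact_mod_cast hN
  have hNs : (0:ℝ) < (N:ℝ) - s := by linarith
  have hpq : p * (N - s) < 2 * N := (lt_div_iff₀ hNs).mp hpc
  have hγ0 : 0 < γ := by
    apply div_pos _ (by linarith)
    nlinarith
  have hγ1 : γ < 1 := by
    rw [div_lt_one (by linarith)]
    nlinarith
  have hqγ : 2 * γ + q * (1 - γ) = p := by
    rw [hγdef, hqdef]
    field_simp
    ring
  -- find r using the limit
  have hev : {x : EuclideanSpace ℝ (Fin N) | K x / V x ^ γ < ε} ∈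
      cocompact (EuclideanSpace ℝ (Fin N)) :=
    hlim (gt_mem_nhds hε)
  rw [Filter.mem_cocompact] at hev
  obtain ⟨T, hTc, hTsub⟩ := hev
  obtain ⟨R, hR⟩ := hTc.isBounded.subset_closedBall 0
  refine ⟨max R 0 + 1, by positivity, ?_⟩
  intro x hx t
  have hxT : x ∉ T := by
    intro hxT
    have := hR hxT
    rw [Metric.mem_closedBall, dist_zero_right] at this
    have : ‖x‖ ≤ max R 0 := le_trans this (le_max_left _ _)
    linarith
  have hKV : K x < ε * V x ^ γ := by
    have h1 : K x / V x ^ γ < ε := hTsub hxT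
    have h2 : (0:ℝ) < V x ^ γ := Real.rpow_pos_of_pos (hVpos x) _
    exact (div_lt_iff₀ h2).mp h1
  rcases eq_or_ne t 0 with rfl | ht
  · simp only [abs_zero]
    rw [Real.zero_rpow (by positivity), Real.zero_rpow (by positivity)]
    have := hVpos x
    nlinarith
  · have habs : (0:ℝ) < |t| := abs_pos.mpr ht
    have key : V x ^ γ * |t| ^ p = (V x * t ^ 2) ^ γ * (|t| ^ q) ^ (1 - γ) := by
      have ht2 : (t ^ 2 : ℝ) = |t| ^ (2 : ℝ) := by
        rw [← sq_abs, ← Real.rpow_natCast |t| 2]; norm_num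
      rw [Real.mul_rpow (hVpos x).le (by positivity), ht2,
        ← Real.rpow_mul habs.le, ← Real.rpow_mul habs.le, mul_assoc,
        ← Real.rpow_add habs, hqγ]
    have hgm : (V x * t ^ 2) ^ γ * (|t| ^ q) ^ (1 - γ) ≤
        γ * (V x * t ^ 2) + (1 - γ) * (|t| ^ q) := by
      have h2 : (0:ℝ) ≤ V x * t ^ 2 := mul_nonneg (hVpos x).le (sq_nonneg t)
      have h3 : (0:ℝ) ≤ |t| ^ q := Real.rpow_nonneg (abs_nonneg t) q
      calc (V x * t ^ 2) ^ γ * (|t| ^ q) ^ (1 - γ)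
          = (|t| ^ q) ^ (1 - γ) * (V x * t ^ 2) ^ γ := by ring
        _ ≤ (1 - γ) * (|t| ^ q) + γ * (V x * t ^ 2) :=
            Real.geom_mean_le_arith_mean2_weighted (by linarith) hγ0.le h3 h2 (by ring)
        _ = γ * (V x * t ^ 2) + (1 - γ) * (|t| ^ q) := by ring
    have hbound : γ * (V x * t ^ 2) + (1 - γ) * (|t| ^ q) ≤ V x * t ^ 2 + |t| ^ q := by
      have h2 : (0:ℝ) ≤ V x * t ^ 2 := mul_nonneg (hVpos x).le (sq_nonneg t)
      have h3 : (0:ℝ) ≤ |t| ^ q := Real.rpow_nonneg (abs_nonneg t) q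
      nlinarith
    have htp : (0:ℝ) < |t| ^ p := Real.rpow_pos_of_pos habs p
    calc K x * |t| ^ p ≤ (ε * V x ^ γ) * |t| ^ p :=
          mul_le_mul_of_nonneg_right hKV.le htp.le
      _ = ε * ((V x * t ^ 2) ^ γ * (|t| ^ q) ^ (1 - γ)) := by rw [mul_assoc, key]
      _ ≤ ε * (γ * (V x * t ^ 2) + (1 - γ) * (|t| ^ q)) :=
          mul_le_mul_of_nonneg_left hgm hε.le
      _ ≤ ε * (V x * t ^ 2 + |t| ^ q) := mul_le_mul_of_nonneg_left hbound hε.le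
end

section
/- Let N be a positive integer, s ∈ (0,2) a real number with s < N, 2*_s = 2N/(N−s), and q ∈ (2, 2*_s). Let V, K : ℝ^N → ℝ be continuous with V(x) > 0 and K(x) > 0 for all x, and suppose both K and K/V are bounded on ℝ^N. Then for every ε > 0 there exist real numbers 0 < s₀ < s₁ and a constant C_ε > 0 such that for all x ∈ ℝ^N and all t ∈ ℝ: K(x)|t|^q ≤ ε (V(x) t² + |t|^{2*_s}) + C_ε K(x) χ_{[s₀,s₁]}(|t|) |t|^{2*_s}, where χ_{[s₀,s₁]} denotes the characteristic function of the interval [s₀, s₁]. -/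
set_option maxHeartbeats 1000000


/-- If `V, K > 0` are continuous, with `K` and `K/V` bounded, then for every
`q ∈ (2, 2*_s)` and every `ε > 0` there are `0 < s₀ < s₁` and `C_ε > 0` with
`K(x)|t|^q ≤ ε (V(x)t² + |t|^{2*_s}) + C_ε K(x) χ_{[s₀,s₁]}(|t|) |t|^{2*_s}`. -/
theorem stmt_2 (N : ℕ) (hN : 0 < N) (s : ℝ) (hs0 : 0 < s) (hs2 : s < 2)
    (hsN : s < (N : ℝ)) (q : ℝ) (hq2 : 2 < q) (hqc : q < 2 * N / (N - s))
    (V K : EuclideanSpace ℝ (Fin N) → ℝ)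
    (hVcont : Continuous V) (hKcont : Continuous K)
    (hVpos : ∀ x, 0 < V x) (hKpos : ∀ x, 0 < K x)
    (hKbdd : ∃ C : ℝ, ∀ x, K x ≤ C)
    (hKVbdd : ∃ C : ℝ, ∀ x, K x / V x ≤ C) :
    ∀ ε > (0 : ℝ), ∃ s₀ s₁ Cε : ℝ, 0 < s₀ ∧ s₀ < s₁ ∧ 0 < Cε ∧
      ∀ x : EuclideanSpace ℝ (Fin N), ∀ t : ℝ,
        K x * |t| ^ q ≤ ε * (V x * t ^ 2 + |t| ^ (2 * N / (N - s))) +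
          Cε * K x * Set.indicator (Set.Icc s₀ s₁) (fun _ => (1 : ℝ)) |t| *
            |t| ^ (2 * N / (N - s)) := by
  obtain ⟨CK, hCK⟩ := hKbdd
  obtain ⟨CV, hCV⟩ := hKVbdd
  intro ε hε
  set p : ℝ := 2 * N / (N - s) with hpdef
  have hqp : q < p := hqc
  have hp2 : 2 < p := lt_trans hq2 hqp
  set A : ℝ := max CK 1 with hAdef
  set B : ℝ := max CV 1 with hBdef
  have hA1 : (1:ℝ) ≤ A := le_max_right _ _
  have hB1 : (1:ℝ) ≤ B := le_max_right _ _
  have hA0 : (0:ℝ) < A := by linarith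
  have hB0 : (0:ℝ) < B := by linarith
  have hKA : ∀ x, K x ≤ A := fun x => (hCK x).trans (le_max_left _ _)
  have hKVB : ∀ x, K x ≤ B * V x := by
    intro x
    have h1 : K x / V x ≤ B := (hCV x).trans (le_max_left _ _)
    have := (div_le_iff₀ (hVpos x)).mp h1
    linarith
  have hεB : 0 < ε / B := div_pos hε hB0
  set s₀ : ℝ := min ((ε / B) ^ (1/(q-2))) 1 with hs₀def
  have hs₀pos : 0 < s₀ := lt_min (Real.rpow_pos_of_pos hεB _) one_pos
  set s₁ : ℝ := max ((A / ε) ^ (1/(p-q))) (s₀ + 1) with hs₁def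
  have hs₀s₁ : s₀ < s₁ := lt_of_lt_of_le (by linarith) (le_max_right _ _)
  have hs₁pos : 0 < s₁ := hs₀pos.trans hs₀s₁
  have hkey1 : B * s₀ ^ (q-2) ≤ ε := by
    have h1 : s₀ ≤ (ε / B) ^ (1/(q-2)) := min_le_left _ _
    have h2 : s₀ ^ (q-2) ≤ ((ε / B) ^ (1/(q-2))) ^ (q-2) :=
      Real.rpow_le_rpow hs₀pos.le h1 (by linarith)
    rw [← Real.rpow_mul hεB.le, one_div,
      inv_mul_cancel₀ (by linarith : q - 2 ≠ 0), Real.rpow_one] at h2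
    have := mul_le_mul_of_nonneg_left h2 hB0.le
    rwa [mul_div_cancel₀ _ (ne_of_gt hB0)] at this
  have hkey2 : A ≤ ε * s₁ ^ (p - q) := by
    have h1 : (A / ε) ^ (1/(p-q)) ≤ s₁ := le_max_left _ _
    have h2 : ((A/ε) ^ (1/(p-q))) ^ (p-q) ≤ s₁ ^ (p-q) :=
      Real.rpow_le_rpow (Real.rpow_nonneg (by positivity) _) h1 (by linarith)
    rw [← Real.rpow_mul (by positivity), one_div,
      inv_mul_cancel₀ (by linarith : p - q ≠ 0), Real.rpow_one] at h2
    have := mul_le_mul_of_nonneg_left h2 hε.le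
    rw [mul_div_cancel₀ _ (ne_of_gt hε)] at this
    linarith
  refine ⟨s₀, s₁, s₁ ^ q / s₀ ^ p, hs₀pos, hs₀s₁, by positivity, ?_⟩
  intro x t
  have hind01 : Set.indicator (Set.Icc s₀ s₁) (fun _ => (1:ℝ)) |t| = 0 ∨
      Set.indicator (Set.Icc s₀ s₁) (fun _ => (1:ℝ)) |t| = 1 := by
    by_cases h : |t| ∈ Set.Icc s₀ s₁ <;> simp [Set.indicator, h]
  have hindnn : 0 ≤ Set.indicator (Set.Icc s₀ s₁) (fun _ => (1:ℝ)) |t| := by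
    rcases hind01 with h | h <;> rw [h] <;> norm_num
  have hrest : 0 ≤ s₁ ^ q / s₀ ^ p * K x *
      Set.indicator (Set.Icc s₀ s₁) (fun _ => (1:ℝ)) |t| * |t| ^ p := by
    have : (0:ℝ) ≤ |t| ^ p := Real.rpow_nonneg (abs_nonneg t) p
    have hK := (hKpos x).le
    positivity
  rcases eq_or_ne t 0 with rfl | ht0
  · have h0 : |(0:ℝ)| = 0 := abs_zero
    rw [h0, Real.zero_rpow (by linarith : q ≠ 0), Real.zero_rpow (by linarith : p ≠ 0)]
    have hv := (hVpos x).le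
    nlinarith [hrest]
  have htpos : 0 < |t| := abs_pos.mpr ht0
  have htp : (0:ℝ) ≤ |t| ^ p := Real.rpow_nonneg (abs_nonneg t) p
  rcases le_or_gt |t| s₀ with hc1 | hc1
  · -- small t
    have e : |t| ^ q = |t| ^ (q-2) * t ^ 2 := by
      rw [show t ^ 2 = |t| ^ ((2:ℕ):ℝ) by rw [Real.rpow_natCast, sq_abs],
        ← Real.rpow_add htpos]
      norm_num
    have h2 : |t| ^ (q-2) ≤ s₀ ^ (q-2) :=
      Real.rpow_le_rpow (abs_nonneg t) hc1 (by linarith)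
    have hmain : K x * |t| ^ q ≤ ε * (V x * t ^ 2) := by
      rw [e]
      have ht2 : (0:ℝ) ≤ t ^ 2 := sq_nonneg t
      calc K x * (|t| ^ (q-2) * t ^ 2) ≤ (B * V x) * (s₀ ^ (q-2) * t ^ 2) := by
            have h3 : |t| ^ (q-2) * t ^ 2 ≤ s₀ ^ (q-2) * t ^ 2 :=
              mul_le_mul_of_nonneg_right h2 ht2
            have h4 : (0:ℝ) ≤ |t| ^ (q-2) * t ^ 2 :=
              mul_nonneg (Real.rpow_nonneg (abs_nonneg t) _) ht2
            exact mul_le_mul (hKVB x) h3 h4 (mul_nonneg hB0.le (hVpos x).le)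
        _ = (B * s₀ ^ (q-2)) * (V x * t ^ 2) := by ring
        _ ≤ ε * (V x * t ^ 2) := by
            have : (0:ℝ) ≤ V x * t ^ 2 := mul_nonneg (hVpos x).le (sq_nonneg t)
            nlinarith
    have hεtp : (0:ℝ) ≤ ε * |t| ^ p := mul_nonneg hε.le htp
    nlinarith [hrest]
  rcases le_or_gt s₁ |t| with hc2 | hc2
  · -- large t
    have e : |t| ^ q = |t| ^ (q-p) * |t| ^ p := by
      rw [← Real.rpow_add htpos]; ring_nf
    have h2 : |t| ^ (q-p) ≤ s₁ ^ (q-p) :=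
      Real.rpow_le_rpow_of_nonpos hs₁pos hc2 (by linarith)
    have hs1 : s₁ ^ (q-p) = (s₁ ^ (p-q))⁻¹ := by
      rw [← Real.rpow_neg hs₁pos.le]; ring_nf
    have hs1pq : 0 < s₁ ^ (p-q) := Real.rpow_pos_of_pos hs₁pos _
    have hA' : A * s₁ ^ (q-p) ≤ ε := by
      rw [hs1, ← div_eq_mul_inv, div_le_iff₀ hs1pq]; linarith
    have hmain : K x * |t| ^ q ≤ ε * |t| ^ p := by
      rw [e]
      have h3 : K x * (|t| ^ (q-p) * |t| ^ p) ≤ A * (s₁ ^ (q-p) * |t| ^ p) := by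
        have hKnn := (hKpos x).le
        have hKa := hKA x
        have h4 : (0:ℝ) ≤ |t| ^ (q-p) := Real.rpow_nonneg (abs_nonneg t) _
        have h5 : |t| ^ (q-p) * |t| ^ p ≤ s₁ ^ (q-p) * |t| ^ p :=
          mul_le_mul_of_nonneg_right h2 htp
        nlinarith [Real.rpow_nonneg hs₁pos.le (q-p), mul_nonneg h4 htp]
      calc K x * (|t| ^ (q-p) * |t| ^ p) ≤ A * s₁ ^ (q-p) * |t| ^ p := by
            linarith [h3, (by ring : A * (s₁ ^ (q-p) * |t| ^ p) = A * s₁ ^ (q-p) * |t| ^ p)]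
        _ ≤ ε * |t| ^ p := mul_le_mul_of_nonneg_right hA' htp
    have hv : (0:ℝ) ≤ ε * (V x * t ^ 2) :=
      mul_nonneg hε.le (mul_nonneg (hVpos x).le (sq_nonneg t))
    nlinarith [hrest]
  · -- middle: s₀ < |t| < s₁
    have hmem : |t| ∈ Set.Icc s₀ s₁ := ⟨hc1.le, hc2.le⟩
    rw [Set.indicator_of_mem hmem]
    have h1 : |t| ^ q ≤ s₁ ^ q :=
      Real.rpow_le_rpow (abs_nonneg t) hc2.le (by linarith)
    have h2 : s₀ ^ p ≤ |t| ^ p :=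
      Real.rpow_le_rpow hs₀pos.le hc1.le (by linarith)
    have hs0p : 0 < s₀ ^ p := Real.rpow_pos_of_pos hs₀pos _
    have hmain : K x * |t| ^ q ≤ s₁ ^ q / s₀ ^ p * K x * |t| ^ p := by
      have hKnn := (hKpos x).le
      have hs1q : 0 < s₁ ^ q := Real.rpow_pos_of_pos hs₁pos _
      have key : |t| ^ q ≤ s₁ ^ q / s₀ ^ p * |t| ^ p := by
        rw [div_mul_eq_mul_div, le_div_iff₀ hs0p]
        nlinarith
      calc K x * |t| ^ q ≤ K x * (s₁ ^ q / s₀ ^ p * |t| ^ p) :=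
            mul_le_mul_of_nonneg_left key hKnn
        _ = s₁ ^ q / s₀ ^ p * K x * |t| ^ p := by ring
    have hv : (0:ℝ) ≤ ε * (V x * t ^ 2 + |t| ^ p) :=
      mul_nonneg hε.le (add_nonneg (mul_nonneg (hVpos x).le (sq_nonneg t)) htp)
    nlinarith
end

section
/- Let N be a positive integer, s ∈ (0,2) a real number with s < N, 2*_s = 2N/(N−s), and q ∈ (2, 2*_s). Let V, K : ℝ^N → ℝ be continuous with V(x) > 0 and K(x) > 0 for all x, and suppose both K and K/V are bounded on ℝ^N. Let f : ℝ → [0,∞) be continuous with f(t) = 0 for t ≤ 0, lim_{t→0⁺} f(t)/t = 0, and lim_{t→+∞} f(t)/t^{2*_s − 1} = 0. Then for every ε > 0 there exist real numbers 0 < s₀ < s₁ and a constant C_ε > 0 such that for all x ∈ ℝ^N and all t ≥ 0: K(x) f(t) t ≤ ε (V(x) t² + t^{2*_s}) + C_ε K(x) χ_{[s₀,s₁]}(t) t^q, where χ_{[s₀,s₁]} denotes the characteristic function of the interval [s₀, s₁]. -/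
open Filter

/-- If `V, K > 0` are continuous with `K` and `K/V` bounded, and `f ≥ 0` is continuous,
vanishes on `ℝ⁻`, with `f(t)/t → 0` as `t → 0⁺` and `f(t)/t^{2*_s−1} → 0` as `t → +∞`,
then for every `q ∈ (2, 2*_s)` and `ε > 0` there are `0 < s₀ < s₁` and `C_ε > 0` with
`K(x) f(t) t ≤ ε (V(x)t² + t^{2*_s}) + C_ε K(x) χ_{[s₀,s₁]}(t) t^q` for all `t ≥ 0`. -/
theorem stmt_3 (N : ℕ) (hN : 0 < N) (s : ℝ) (hs0 : 0 < s) (hs2 : s < 2)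
    (hsN : s < (N : ℝ)) (q : ℝ) (hq2 : 2 < q) (hqc : q < 2 * N / (N - s))
    (V K : EuclideanSpace ℝ (Fin N) → ℝ)
    (hVcont : Continuous V) (hKcont : Continuous K)
    (hVpos : ∀ x, 0 < V x) (hKpos : ∀ x, 0 < K x)
    (hKbdd : ∃ C : ℝ, ∀ x, K x ≤ C)
    (hKVbdd : ∃ C : ℝ, ∀ x, K x / V x ≤ C)
    (f : ℝ → ℝ) (hfcont : Continuous f) (hfnonneg : ∀ t, 0 ≤ f t)
    (hfneg : ∀ t ≤ (0 : ℝ), f t = 0)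
    (hf0 : Tendsto (fun t => f t / t) (nhdsWithin 0 (Set.Ioi 0)) (nhds 0))
    (hfinfty : Tendsto (fun t => f t / t ^ (2 * N / (N - s) - 1)) atTop (nhds 0)) :
    ∀ ε > (0 : ℝ), ∃ s₀ s₁ Cε : ℝ, 0 < s₀ ∧ s₀ < s₁ ∧ 0 < Cε ∧
      ∀ x : EuclideanSpace ℝ (Fin N), ∀ t : ℝ, 0 ≤ t →
        K x * f t * t ≤ ε * (V x * t ^ 2 + t ^ (2 * N / (N - s))) +
          Cε * K x * Set.indicator (Set.Icc s₀ s₁) (fun _ => (1 : ℝ)) t * t ^ q := by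
  intro ε hε
  set p : ℝ := 2 * N / (N - s) with hpdef
  have hNs : (0:ℝ) < (N:ℝ) - s := by linarith
  have hp2 : 2 < p := by
    rw [hpdef, lt_div_iff₀ hNs]; nlinarith
  obtain ⟨C₁, hC₁⟩ := hKVbdd
  obtain ⟨C₂, hC₂⟩ := hKbdd
  set C₁' := max C₁ 1 with hC₁'def
  set C₂' := max C₂ 1 with hC₂'def
  have hC₁'pos : 0 < C₁' := lt_of_lt_of_le one_pos (le_max_right _ _)
  have hC₂'pos : 0 < C₂' := lt_of_lt_of_le one_pos (le_max_right _ _)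
  have hKV : ∀ x, K x ≤ C₁' * V x := by
    intro x
    have hV := hVpos x
    have h1 : K x ≤ C₁ * V x := (div_le_iff₀ hV).mp (hC₁ x)
    exact h1.trans (mul_le_mul_of_nonneg_right (le_max_left _ _) hV.le)
  have hK2 : ∀ x, K x ≤ C₂' := fun x => (hC₂ x).trans (le_max_left _ _)
  -- small t bound
  have h0 := hf0.eventually_lt_const (show (0:ℝ) < ε / C₁' by positivity)
  rw [eventually_nhdsWithin_iff, Metric.eventually_nhds_iff] at h0
  obtain ⟨δ, hδpos, hδ⟩ := h0
  -- large t bound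
  have hinf := hfinfty.eventually_lt_const (show (0:ℝ) < ε / C₂' by positivity)
  rw [eventually_atTop] at hinf
  obtain ⟨M, hM⟩ := hinf
  set s₀ : ℝ := δ / 2 with hs₀def
  have hs₀pos : 0 < s₀ := by positivity
  set s₁ : ℝ := max M s₀ + 1 with hs₁def
  have hs₀₁ : s₀ < s₁ := lt_of_le_of_lt (le_max_right M s₀) (lt_add_one _)
  have hs₁pos : 0 < s₁ := hs₀pos.trans hs₀₁
  obtain ⟨z, hz, hB⟩ := isCompact_Icc.exists_isMaxOn ⟨s₀, le_refl s₀, hs₀₁.le⟩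
    hfcont.continuousOn
  set B := f z with hBdef
  have hBnn : 0 ≤ B := hfnonneg z
  have hs₀q : (0:ℝ) < s₀ ^ q := Real.rpow_pos_of_pos hs₀pos q
  set Cε : ℝ := B * s₁ / s₀ ^ q + 1 with hCεdef
  have hCεpos : 0 < Cε := by
    have h : 0 ≤ B * s₁ / s₀ ^ q := by positivity
    rw [hCεdef]; linarith
  refine ⟨s₀, s₁, Cε, hs₀pos, hs₀₁, hCεpos, ?_⟩
  intro x t ht
  have hVx := hVpos x
  have hKx := hKpos x
  have hindnn : 0 ≤ Set.indicator (Set.Icc s₀ s₁) (fun _ => (1 : ℝ)) t :=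
    Set.indicator_nonneg (fun _ _ => zero_le_one) t
  rcases eq_or_lt_of_le ht with heq | htpos
  · -- t = 0
    have h0not : (0:ℝ) ∉ Set.Icc s₀ s₁ := fun h => absurd h.1 (not_le.mpr hs₀pos)
    simp [← heq, hfneg 0 le_rfl, Set.indicator_of_notMem h0not,
      Real.zero_rpow (show p ≠ 0 by linarith), Real.zero_rpow (show q ≠ 0 by linarith)]
  · have htp : 0 ≤ t ^ p := Real.rpow_nonneg ht p
    have htq : 0 ≤ t ^ q := Real.rpow_nonneg ht q
    have hindterm : 0 ≤ Cε * K x * Set.indicator (Set.Icc s₀ s₁) (fun _ => (1 : ℝ)) t * t ^ q := by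
      apply mul_nonneg (mul_nonneg (mul_nonneg hCεpos.le hKx.le) hindnn) htq
    rcases lt_or_ge t s₀ with hts | hts
    · -- small t
      have hdist : dist t 0 < δ := by
        rw [Real.dist_eq, sub_zero, abs_of_pos htpos]
        calc t < s₀ := hts
          _ < δ := by rw [hs₀def]; linarith
      have hfb : f t < (ε / C₁') * t := by
        have := hδ hdist htpos
        exact (div_lt_iff₀ htpos).mp this
      have h1 : K x * f t ≤ (C₁' * V x) * ((ε / C₁') * t) :=
        mul_le_mul (hKV x) hfb.le (hfnonneg t) (by positivity)
      have h2 : K x * f t * t ≤ (C₁' * V x) * ((ε / C₁') * t) * t :=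
        mul_le_mul_of_nonneg_right h1 ht
      have h3 : (C₁' * V x) * ((ε / C₁') * t) * t = ε * (V x * t ^ 2) := by
        field_simp
      have h4 : 0 ≤ ε * t ^ p := mul_nonneg hε.le htp
      nlinarith [h2, h3]
    · rcases le_or_gt t s₁ with hts1 | hts1
      · -- middle range
        have hmem : t ∈ Set.Icc s₀ s₁ := ⟨hts, hts1⟩
        have hind1 : Set.indicator (Set.Icc s₀ s₁) (fun _ => (1 : ℝ)) t = 1 :=
          Set.indicator_of_mem hmem (fun _ => (1:ℝ))
        have hft : f t ≤ B := hB hmem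
        have h1 : f t * t ≤ B * s₁ :=
          mul_le_mul hft hts1 ht hBnn
        have h2 : B * s₁ ≤ Cε * s₀ ^ q := by
          rw [hCεdef, add_mul, div_mul_cancel₀ _ hs₀q.ne', one_mul]
          linarith
        have h3 : Cε * s₀ ^ q ≤ Cε * t ^ q :=
          mul_le_mul_of_nonneg_left (Real.rpow_le_rpow hs₀pos.le hts (by linarith)) hCεpos.le
        have h4 : K x * (f t * t) ≤ K x * (Cε * t ^ q) :=
          mul_le_mul_of_nonneg_left (h1.trans (h2.trans h3)) hKx.le
        have h5 : 0 ≤ ε * (V x * t ^ 2 + t ^ p) := by positivity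
        calc K x * f t * t = K x * (f t * t) := by ring
          _ ≤ K x * (Cε * t ^ q) := h4
          _ = Cε * K x * 1 * t ^ q := by ring
          _ = Cε * K x * Set.indicator (Set.Icc s₀ s₁) (fun _ => (1 : ℝ)) t * t ^ q := by
              rw [hind1]
          _ ≤ _ := le_add_of_nonneg_left h5
      · -- large t
        have htM : M ≤ t := le_trans (le_trans (le_max_left M s₀) (by linarith)) hts1.le
        have hpow : (0:ℝ) < t ^ (p - 1) := Real.rpow_pos_of_pos htpos _
        have hfb : f t < (ε / C₂') * t ^ (p - 1) := by
          have := hM t htM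
          exact (div_lt_iff₀ hpow).mp this
        have h1 : K x * f t ≤ C₂' * ((ε / C₂') * t ^ (p - 1)) :=
          mul_le_mul (hK2 x) hfb.le (hfnonneg t) hC₂'pos.le
        have h2 : K x * f t * t ≤ C₂' * ((ε / C₂') * t ^ (p - 1)) * t :=
          mul_le_mul_of_nonneg_right h1 ht
        have hmul : t ^ (p - 1) * t = t ^ p := by
          rw [← Real.rpow_add_one htpos.ne' (p - 1)]
          norm_num
        have h3 : C₂' * ((ε / C₂') * t ^ (p - 1)) * t = ε * t ^ p := by
          rw [← hmul]; field_simp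
        have h4 : 0 ≤ ε * (V x * t ^ 2) := by positivity
        have hexp : ε * (V x * t ^ 2 + t ^ p) = ε * (V x * t ^ 2) + ε * t ^ p := by ring
        calc K x * f t * t ≤ ε * t ^ p := h2.trans_eq h3
          _ ≤ _ := by linarith
end
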